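/- The Catalan numbers satisfy the alternating-sign convolution identity implied by the recursion A_i = a_i + Σ_{k=1}^{i-1} a_k [t^{i-k}](Σ_j A_j t^j)^{2k+1} with a_k = -(-1)^k: explicitly, for each i ≥ 1, C_i = -(-1)^i + Σ_{k=1}^{i-1} (-(-1)^k) · Σ_{j₁+...+j_{2k+1} = i-k} C_{j₁}···C_{j_{2k+1}}, where C_m is the m-th Catalan number (C₀ = 1). -/

import Mathlib

open PowerSeries Finset

/-- The `i`-th Catalan number `binomial(2i,i)/(i+1)`, as a rational number. -/
def catalanQ (i : ℕ) : ℚ := (Nat.choose (2 * i) i : ℚ) / ((i : ℚ) + 1)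

noncomputable def Cs : PowerSeries ℚ := PowerSeries.mk (fun n => (catalan n : ℚ))

lemma coeff_Cs (n : ℕ) : PowerSeries.coeff n Cs = (catalan n : ℚ) := by
  simp [Cs]

lemma coeff_pow_tuple (φ : PowerSeries ℚ) (k : ℕ) : ∀ n : ℕ,
    PowerSeries.coeff n (φ ^ k)
      = ∑ j ∈ Finset.Nat.antidiagonalTuple k n, ∏ m, PowerSeries.coeff (j m) φ := by
  induction k with
  | zero => intro n; cases n <;> simp
  | succ k ih =>
    intro n
    rw [pow_succ', PowerSeries.coeff_mul]
    simp_rw [ih, Finset.mul_sum]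
    rw [Finset.sum_sigma']
    refine Finset.sum_nbij' (fun x => Fin.cons x.1.1 x.2)
      (fun t => ⟨(t 0, ∑ m : Fin k, t m.succ), Fin.tail t⟩) ?_ ?_ ?_ ?_ ?_
    · rintro ⟨⟨a, b⟩, x⟩ h
      simp only [Finset.mem_sigma, Finset.HasAntidiagonal.mem_antidiagonal,
        Finset.Nat.mem_antidiagonalTuple] at h ⊢
      rw [Fin.sum_univ_succ]
      simp [h.1, h.2]
    · intro t ht
      simp only [Finset.Nat.mem_antidiagonalTuple] at ht
      simp only [Finset.mem_sigma, Finset.HasAntidiagonal.mem_antidiagonal,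
        Finset.Nat.mem_antidiagonalTuple]
      constructor
      · rw [← ht, Fin.sum_univ_succ]
      · simp [Fin.tail]
    · rintro ⟨⟨a, b⟩, x⟩ h
      simp only [Finset.mem_sigma, Finset.mem_antidiagonal,
        Finset.Nat.mem_antidiagonalTuple] at h
      simp only [Fin.cons_zero, Fin.tail_cons]
      congr 1
      simp [h.2]
    · intro t ht
      simp [Fin.cons_self_tail]
    · rintro ⟨⟨a, b⟩, x⟩ h
      rw [Fin.prod_univ_succ]
      simp

lemma Cs_eq : Cs = 1 + PowerSeries.X * Cs ^ 2 := by
  ext n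
  cases n with
  | zero => simp [Cs]
  | succ n =>
    rw [map_add, PowerSeries.coeff_succ_X_mul, coeff_Cs]
    rw [sq, PowerSeries.coeff_mul]
    simp only [coeff_Cs]
    rw [PowerSeries.coeff_one, if_neg (Nat.succ_ne_zero n), zero_add]
    rw [catalan_succ']
    push_cast
    rfl

lemma geom_sum_Cs (N : ℕ) :
    ∑ k ∈ Finset.Icc 1 N, (PowerSeries.C (-(-1 : ℚ) ^ k)) * PowerSeries.X ^ k * Cs ^ (2 * k + 1)
      = (Cs - 1) + (PowerSeries.C ((-1 : ℚ) ^ (N + 1))) * (PowerSeries.X * Cs ^ 2) ^ (N + 1) := by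
  induction N with
  | zero =>
    rw [Finset.Icc_eq_empty (by norm_num), Finset.sum_empty]
    have h := Cs_eq
    simp only [map_neg, map_pow, map_one, zero_add, pow_one]
    linear_combination (-1 : PowerSeries ℚ) * h
  | succ N ih =>
    rw [Finset.sum_Icc_succ_top (by omega : 1 ≤ N + 1), ih]
    have h := Cs_eq
    simp only [map_neg, map_pow, map_one]
    linear_combination ((-1 : PowerSeries ℚ)^(N+2) * (PowerSeries.X * Cs^2)^(N+1)) * h

lemma catalanQ_eq (n : ℕ) : catalanQ n = (catalan n : ℚ) := by
  have h := succ_mul_catalan_eq_centralBinom n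
  have h2 : ((n : ℚ) + 1) ≠ 0 := by positivity
  rw [catalanQ, Nat.centralBinom] at *
  field_simp
  push_cast [← h]
  ring

theorem catalan_alternating_convolution (i : ℕ) (hi : 1 ≤ i) :
    catalanQ i = (-(-1 : ℚ) ^ i) +
      ∑ k ∈ Finset.Icc 1 (i - 1), (-(-1 : ℚ) ^ k) *
        ∑ j ∈ Finset.Nat.antidiagonalTuple (2 * k + 1) (i - k),
          ∏ m : Fin (2 * k + 1), catalanQ (j m) := by
  have key := congrArg (PowerSeries.coeff i) (geom_sum_Cs i)
  rw [map_sum, map_add, map_sub, coeff_Cs] at key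
  have hone : PowerSeries.coeff i (1 : PowerSeries ℚ) = 0 := by
    rw [PowerSeries.coeff_one, if_neg (by omega)]
  have htail : PowerSeries.coeff i
      ((PowerSeries.C ((-1 : ℚ) ^ (i + 1))) * (PowerSeries.X * Cs ^ 2) ^ (i + 1)) = 0 := by
    rw [mul_pow, ← mul_assoc, mul_comm (PowerSeries.C _), mul_assoc,
      PowerSeries.coeff_X_pow_mul', if_neg (by omega)]
  rw [hone, htail, sub_zero, add_zero] at key
  have hterm : ∀ k ∈ Finset.Icc 1 i, PowerSeries.coeff i
      ((PowerSeries.C (-(-1 : ℚ) ^ k)) * PowerSeries.X ^ k * Cs ^ (2 * k + 1))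
      = (-(-1 : ℚ) ^ k) * ∑ j ∈ Finset.Nat.antidiagonalTuple (2 * k + 1) (i - k),
          ∏ m : Fin (2 * k + 1), catalanQ (j m) := by
    intro k hk
    rw [Finset.mem_Icc] at hk
    rw [mul_assoc, PowerSeries.coeff_C_mul, PowerSeries.coeff_X_pow_mul',
      if_pos hk.2, coeff_pow_tuple]
    simp_rw [coeff_Cs, catalanQ_eq]
  rw [Finset.sum_congr rfl hterm] at key
  have hsplit : Finset.Icc 1 i = Finset.Icc 1 (i - 1) ∪ {i} := by
    ext x; simp [Finset.mem_Icc]; omega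
  have hdisj : Disjoint (Finset.Icc 1 (i - 1)) ({i} : Finset ℕ) := by
    simp [Finset.disjoint_singleton_right, Finset.mem_Icc]; omega
  rw [hsplit, Finset.sum_union hdisj, Finset.sum_singleton] at key
  have hlast : (-(-1 : ℚ) ^ i) * ∑ j ∈ Finset.Nat.antidiagonalTuple (2 * i + 1) (i - i),
      ∏ m : Fin (2 * i + 1), catalanQ (j m) = -(-1 : ℚ) ^ i := by
    rw [Nat.sub_self, Finset.Nat.antidiagonalTuple_zero_right, Finset.sum_singleton]
    simp [catalanQ]
  rw [hlast] at key
  rw [catalanQ_eq, ← key]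
  ring
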